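/- Let l_1, l_2, t_n ∈ ℕ, D_n ≥ 0, let A ⊂ ℝ^{l_1} be closed and convex, B ⊆ ℝ^{l_2}, and let F_t, F : ℝ^{l_1}×ℝ^{l_2} → ℝ_+ (t = 0,...,t_n−1) be functions such that for each t: u ↦ F(u,v) is differentiable and convex for all v ∈ ℝ^{l_2}, u ↦ F_t(u,v) is differentiable for all v ∈ ℝ^{l_2}, and ‖(∇_u F_t)(u,v)‖ ≤ D_n for all (u,v) ∈ A×B. Choose (u_0,v_0) ∈ A×B, let v_1,...,v_{t_n} ∈ B, set λ = 1/t_n, and define u_{t+1} = Proj_A(u_t − λ·(∇_u F_t)(u_t,v_t)) for t = 0,...,t_n−1. Then for any u* ∈ A: (1/t_n)·Σ_{t=0}^{t_n−1} F(u_t,v_t) ≤ F(u*,v_0) + (1/t_n)·Σ_{t=1}^{t_n−1} |F(u*,v_t) − F(u*,v_0)| + ‖u* − u_0‖²/2 + D_n²/(2·t_n) + (1/t_n)·Σ_{t=0}^{t_n−1} ⟨(∇_u F)(u_t,v_t) − (∇_u F_t)(u_t,v_t), u_t − u*⟩. -/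

import Mathlib

open Finset
open scoped RealInnerProductSpace

noncomputable section

lemma grad_ineq_aux {d : ℕ} {f : EuclideanSpace ℝ (Fin d) → ℝ}
    (hd : Differentiable ℝ f) (hc : ConvexOn ℝ Set.univ f)
    (x y : EuclideanSpace ℝ (Fin d)) :
    f x + ⟪gradient f x, y - x⟫ ≤ f y := by
  rcases eq_or_ne y x with rfl | hne
  · simp
  have hcurve : ∀ s : ℝ, HasDerivAt (fun s : ℝ => x + s • (y - x)) (y - x) s := by
    intro s
    simpa using ((hasDerivAt_id s).smul_const (y - x)).const_add x
  have hgderiv : HasDerivAt (fun s : ℝ => f (x + s • (y - x)))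
      ⟪gradient f x, y - x⟫ 0 := by
    have h1 : HasFDerivAt f ((InnerProductSpace.toDual ℝ _) (gradient f x)) x :=
      hasGradientAt_iff_hasFDerivAt.mp (hd x).hasGradientAt
    have h1' : HasFDerivAt f ((InnerProductSpace.toDual ℝ _) (gradient f x))
        (x + (0:ℝ) • (y - x)) := by simpa using h1
    have := h1'.comp_hasDerivAt 0 (hcurve 0)
    simpa [Function.comp_def] using this
  have hgc : ConvexOn ℝ Set.univ (fun s : ℝ => f (x + s • (y - x))) := by
    have h := hc.comp_affineMap (AffineMap.lineMap x y : ℝ →ᵃ[ℝ] EuclideanSpace ℝ (Fin d))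
    have heq : (f ∘ (AffineMap.lineMap x y : ℝ →ᵃ[ℝ] EuclideanSpace ℝ (Fin d)))
        = fun s : ℝ => f (x + s • (y - x)) := by
      funext s
      simp [Function.comp, AffineMap.lineMap_apply, vsub_eq_sub, vadd_eq_add, add_comm]
    rw [heq, Set.preimage_univ] at h
    exact h
  have hs := hgc.le_slope_of_hasDerivAt (Set.mem_univ (0:ℝ)) (Set.mem_univ 1) one_pos hgderiv
  rw [slope_def_field] at hs
  have e0 : x + (0:ℝ) • (y - x) = x := by simp
  have e1 : x + (1:ℝ) • (y - x) = y := by simp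
  simp only [e0, e1] at hs
  rw [show ((1:ℝ) - 0) = 1 by norm_num, div_one] at hs
  linarith

lemma proj_contract {d : ℕ} {A : Set (EuclideanSpace ℝ (Fin d))}
    (hAconv : Convex ℝ A)
    {x p : EuclideanSpace ℝ (Fin d)} (hp : p ∈ A)
    (hmin : ∀ z ∈ A, ‖x - p‖ ≤ ‖x - z‖)
    {z : EuclideanSpace ℝ (Fin d)} (hz : z ∈ A) :
    ‖p - z‖ ≤ ‖x - z‖ := by
  haveI : Nonempty A := ⟨⟨p, hp⟩⟩
  have hinf : ‖x - p‖ = ⨅ w : A, ‖x - w‖ := by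
    apply le_antisymm
    · exact le_ciInf fun w => hmin w w.2
    · exact ciInf_le ⟨0, by rintro y ⟨w, rfl⟩; exact norm_nonneg _⟩ (⟨p, hp⟩ : A)
  have hvar := (norm_eq_iInf_iff_real_inner_le_zero hAconv hp).mp hinf
  have h1 : ⟪x - p, z - p⟫ ≤ 0 := hvar z hz
  have hexp : ‖x - z‖^2 = ‖x - p‖^2 + 2*⟪x - p, p - z⟫ + ‖p - z‖^2 := by
    have e : x - z = (x - p) + (p - z) := by abel
    rw [e, norm_add_sq_real]
  have h2 : ⟪x - p, p - z⟫ = -⟪x - p, z - p⟫ := by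
    rw [← inner_neg_right]; congr 1; abel
  have h3 : ‖p - z‖^2 ≤ ‖x - z‖^2 := by
    rw [hexp, h2]; nlinarith [sq_nonneg ‖x - p‖]
  exact le_of_pow_le_pow_left₀ two_ne_zero (norm_nonneg _) h3

set_option maxHeartbeats 1000000 in
/-- **Lemma 1** (projected stochastic gradient descent bound).
`projA` is the metric (`L₂`) projection onto the closed convex set `A`,
characterized by membership and distance minimization. -/
theorem statement_3
    (l₁ l₂ tn : ℕ) (hl₁ : 0 < l₁) (hl₂ : 0 < l₂) (htn : 0 < tn)
    (Dn : ℝ) (hDn : 0 ≤ Dn)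
    (A : Set (EuclideanSpace ℝ (Fin l₁))) (hAclosed : IsClosed A) (hAconv : Convex ℝ A)
    (B : Set (EuclideanSpace ℝ (Fin l₂)))
    (F : EuclideanSpace ℝ (Fin l₁) → EuclideanSpace ℝ (Fin l₂) → ℝ)
    (Ft : ℕ → EuclideanSpace ℝ (Fin l₁) → EuclideanSpace ℝ (Fin l₂) → ℝ)
    (hF0 : ∀ u v, 0 ≤ F u v)
    (hFt0 : ∀ t, t < tn → ∀ u v, 0 ≤ Ft t u v)
    (hFdiff : ∀ v, Differentiable ℝ fun u => F u v)
    (hFconv : ∀ v, ConvexOn ℝ Set.univ fun u => F u v)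
    (hFtdiff : ∀ t, t < tn → ∀ v, Differentiable ℝ fun u => Ft t u v)
    (hFtgrad : ∀ t, t < tn → ∀ u ∈ A, ∀ v ∈ B,
      ‖gradient (fun u' => Ft t u' v) u‖ ≤ Dn)
    (projA : EuclideanSpace ℝ (Fin l₁) → EuclideanSpace ℝ (Fin l₁))
    (hprojA : ∀ x, projA x ∈ A ∧ ∀ z ∈ A, ‖x - projA x‖ ≤ ‖x - z‖)
    (u : ℕ → EuclideanSpace ℝ (Fin l₁)) (v : ℕ → EuclideanSpace ℝ (Fin l₂))
    (hu0 : u 0 ∈ A) (hv : ∀ t, t ≤ tn → v t ∈ B)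
    (hupd : ∀ t, t < tn →
      u (t + 1) = projA (u t - (1 / (tn : ℝ)) • gradient (fun u' => Ft t u' (v t)) (u t)))
    (ustar : EuclideanSpace ℝ (Fin l₁)) (hustar : ustar ∈ A) :
    (1 / (tn : ℝ)) * ∑ t ∈ Finset.range tn, F (u t) (v t)
      ≤ F ustar (v 0)
        + (1 / (tn : ℝ)) * ∑ t ∈ Finset.Ico 1 tn, |F ustar (v t) - F ustar (v 0)|
        + ‖ustar - u 0‖ ^ 2 / 2
        + Dn ^ 2 / (2 * (tn : ℝ))
        + (1 / (tn : ℝ)) * ∑ t ∈ Finset.range tn,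
            ⟪gradient (fun u' => F u' (v t)) (u t)
              - gradient (fun u' => Ft t u' (v t)) (u t), u t - ustar⟫ := by
  set T : ℝ := (tn : ℝ) with hTdef
  have hT : (0:ℝ) < T := by rw [hTdef]; exact_mod_cast htn
  have hT0 : T ≠ 0 := ne_of_gt hT
  have huA : ∀ t, t ≤ tn → u t ∈ A := by
    intro t
    induction t with
    | zero => intro _; exact hu0
    | succ n ih =>
      intro h
      rw [hupd n (by omega)]
      exact (hprojA _).1
  have key : ∀ t, t < tn →
      F (u t) (v t) ≤ F ustar (v t)
        + ⟪gradient (fun u' => F u' (v t)) (u t)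
            - gradient (fun u' => Ft t u' (v t)) (u t), u t - ustar⟫
        + (T/2) * (‖u t - ustar‖^2 - ‖u (t+1) - ustar‖^2) + Dn^2/(2*T) := by
    intro t ht
    set g := gradient (fun u' => Ft t u' (v t)) (u t) with hgdef
    set G := gradient (fun u' => F u' (v t)) (u t) with hGdef
    have ha := grad_ineq_aux (hFdiff (v t)) (hFconv (v t)) (u t) ustar
    have hgnorm : ‖g‖ ≤ Dn := hFtgrad t ht (u t) (huA t ht.le) (v t) (hv t ht.le)
    have hstep : ‖u (t+1) - ustar‖^2
        ≤ ‖u t - ustar‖^2 - 2*(1/T)*⟪g, u t - ustar⟫ + (1/T)^2 * ‖g‖^2 := by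
      have h1 : ‖u (t+1) - ustar‖ ≤ ‖(u t - (1/T) • g) - ustar‖ := by
        rw [hupd t ht]
        exact proj_contract hAconv (hprojA _).1 (fun z hz => (hprojA _).2 z hz) hustar
      have h2 : ‖(u t - (1/T) • g) - ustar‖^2
          = ‖u t - ustar‖^2 - 2*(1/T)*⟪g, u t - ustar⟫ + (1/T)^2*‖g‖^2 := by
        have e : (u t - (1/T) • g) - ustar = (u t - ustar) - (1/T) • g := by abel
        rw [e, norm_sub_sq_real, real_inner_smul_right, norm_smul, real_inner_comm]
        rw [Real.norm_eq_abs, abs_of_pos (by positivity : (0:ℝ) < 1/T)]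
        ring
      have h3 := pow_le_pow_left₀ (norm_nonneg _) h1 2
      linarith [h2 ▸ h3]
    have hb : ⟪g, u t - ustar⟫
        ≤ (T/2)*(‖u t - ustar‖^2 - ‖u (t+1) - ustar‖^2) + Dn^2/(2*T) := by
      have hg2 : ‖g‖^2 ≤ Dn^2 := by nlinarith [norm_nonneg g]
      have h3 : 2*(1/T)*⟪g, u t - ustar⟫
          ≤ (‖u t - ustar‖^2 - ‖u (t+1) - ustar‖^2) + (1/T)^2*Dn^2 := by
        nlinarith [sq_nonneg (1/T)]
      calc ⟪g, u t - ustar⟫ = (T/2) * (2*(1/T)*⟪g, u t - ustar⟫) := by field_simp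
        _ ≤ (T/2) * ((‖u t - ustar‖^2 - ‖u (t+1) - ustar‖^2) + (1/T)^2*Dn^2) :=
            mul_le_mul_of_nonneg_left h3 (by positivity)
        _ = (T/2)*(‖u t - ustar‖^2 - ‖u (t+1) - ustar‖^2) + Dn^2/(2*T) := by
            field_simp
    have hsplit : ⟪G - g, u t - ustar⟫ = ⟪G, u t - ustar⟫ - ⟪g, u t - ustar⟫ :=
      inner_sub_left _ _ _
    have hflip : ⟪G, ustar - u t⟫ = -⟪G, u t - ustar⟫ := by
      rw [← inner_neg_right]; congr 1; abel
    rw [hflip] at ha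
    linarith
  have hsum1 : ∑ t ∈ range tn, F (u t) (v t)
      ≤ ∑ t ∈ range tn, (F ustar (v t)
        + ⟪gradient (fun u' => F u' (v t)) (u t)
            - gradient (fun u' => Ft t u' (v t)) (u t), u t - ustar⟫
        + (T/2) * (‖u t - ustar‖^2 - ‖u (t+1) - ustar‖^2) + Dn^2/(2*T)) :=
    Finset.sum_le_sum fun t ht => key t (mem_range.mp ht)
  rw [Finset.sum_add_distrib, Finset.sum_add_distrib, Finset.sum_add_distrib] at hsum1
  have htel : ∑ t ∈ range tn, (T/2)*(‖u t - ustar‖^2 - ‖u (t+1) - ustar‖^2)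
      = (T/2)*(‖u 0 - ustar‖^2 - ‖u tn - ustar‖^2) := by
    rw [← Finset.mul_sum, Finset.sum_range_sub' (fun t => ‖u t - ustar‖^2)]
  have hconst : ∑ t ∈ range tn, (Dn^2/(2*T)) = Dn^2/2 := by
    rw [Finset.sum_const, card_range, nsmul_eq_mul, ← hTdef]
    field_simp
  have hc : ∑ t ∈ range tn, F ustar (v t)
      ≤ T * F ustar (v 0) + ∑ t ∈ Ico 1 tn, |F ustar (v t) - F ustar (v 0)| := by
    have h0 : ∑ t ∈ range tn, F ustar (v t)
        = F ustar (v 0) + ∑ t ∈ Ico 1 tn, F ustar (v t) := by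
      rw [Finset.range_eq_Ico, Finset.sum_eq_sum_Ico_succ_bot htn]
    rw [h0]
    have h1 : ∑ t ∈ Ico 1 tn, F ustar (v t)
        ≤ ∑ t ∈ Ico 1 tn, (F ustar (v 0) + |F ustar (v t) - F ustar (v 0)|) :=
      Finset.sum_le_sum fun t _ => by
        have := le_abs_self (F ustar (v t) - F ustar (v 0)); linarith
    rw [Finset.sum_add_distrib, Finset.sum_const, Nat.card_Ico, nsmul_eq_mul] at h1
    have hcast : ((tn - 1 : ℕ) : ℝ) = T - 1 := by
      rw [hTdef, Nat.cast_sub htn]; norm_num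
    rw [hcast] at h1
    nlinarith [h1]
  have hrtn : (0:ℝ) ≤ ‖u tn - ustar‖^2 := sq_nonneg _
  have hr0 : ‖u 0 - ustar‖^2 = ‖ustar - u 0‖^2 := by rw [norm_sub_rev]
  have hTr : 0 ≤ (T/2) * ‖u tn - ustar‖^2 := mul_nonneg (by positivity) hrtn
  have hfinal : ∑ t ∈ range tn, F (u t) (v t)
      ≤ T * F ustar (v 0) + (∑ t ∈ Ico 1 tn, |F ustar (v t) - F ustar (v 0)|)
        + T * ‖ustar - u 0‖^2 / 2 + Dn^2/2
        + ∑ t ∈ range tn, ⟪gradient (fun u' => F u' (v t)) (u t)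
            - gradient (fun u' => Ft t u' (v t)) (u t), u t - ustar⟫ := by
    rw [htel, hconst] at hsum1
    rw [hr0] at hsum1
    linarith [hsum1, hc, hTr]
  calc (1/T) * ∑ t ∈ range tn, F (u t) (v t)
      ≤ (1/T) * (T * F ustar (v 0) + (∑ t ∈ Ico 1 tn, |F ustar (v t) - F ustar (v 0)|)
        + T * ‖ustar - u 0‖^2 / 2 + Dn^2/2
        + ∑ t ∈ range tn, ⟪gradient (fun u' => F u' (v t)) (u t)
            - gradient (fun u' => Ft t u' (v t)) (u t), u t - ustar⟫) :=
        mul_le_mul_of_nonneg_left hfinal (by positivity)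
    _ = F ustar (v 0)
        + (1/T) * ∑ t ∈ Ico 1 tn, |F ustar (v t) - F ustar (v 0)|
        + ‖ustar - u 0‖^2 / 2 + Dn^2/(2*T)
        + (1/T) * ∑ t ∈ range tn, ⟪gradient (fun u' => F u' (v t)) (u t)
            - gradient (fun u' => Ft t u' (v t)) (u t), u t - ustar⟫ := by
        set a := F ustar (v 0) with hadef
        set b := ∑ t ∈ Ico 1 tn, |F ustar (v t) - F ustar (v 0)| with hbdef
        set c := ‖ustar - u 0‖^2 with hcdef
        set e := ∑ t ∈ range tn, ⟪gradient (fun u' => F u' (v t)) (u t)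
            - gradient (fun u' => Ft t u' (v t)) (u t), u t - ustar⟫ with hedef
        field_simp
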